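/- (Case B.) If N1 ≥ N2 and M1 > N2 > M2 ≥ 1, then Ph1 = Pi and Ph2 = Pd. -/

import Mathlib

open Set

noncomputable section

/-- Bound L01 : 0 ≤ d1 ≤ min(M1,N1). -/
def L01 (M1 N1 : ℕ) (d : ℝ × ℝ) : Prop := 0 ≤ d.1 ∧ d.1 ≤ min (M1 : ℝ) (N1 : ℝ)

/-- Bound L02 : 0 ≤ d2 ≤ min(M2,N2). -/
def L02 (M2 N2 : ℕ) (d : ℝ × ℝ) : Prop := 0 ≤ d.2 ∧ d.2 ≤ min (M2 : ℝ) (N2 : ℝ)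

/-- Bound L1 : d1/min(N1+N2,M1) + d2/min(N2,M1) ≤ min(N2,M1+M2)/min(N2,M1). -/
def L1 (M1 M2 N1 N2 : ℕ) (d : ℝ × ℝ) : Prop :=
  d.1 / min ((N1 : ℝ) + (N2 : ℝ)) (M1 : ℝ) + d.2 / min (N2 : ℝ) (M1 : ℝ) ≤
    min (N2 : ℝ) ((M1 : ℝ) + (M2 : ℝ)) / min (N2 : ℝ) (M1 : ℝ)

/-- Bound L2 : d1/min(N1,M2) + d2/min(N1+N2,M2) ≤ min(N1,M1+M2)/min(N1,M2). -/
def L2 (M1 M2 N1 N2 : ℕ) (d : ℝ × ℝ) : Prop :=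
  d.1 / min (N1 : ℝ) (M2 : ℝ) + d.2 / min ((N1 : ℝ) + (N2 : ℝ)) (M2 : ℝ) ≤
    min (N1 : ℝ) ((M1 : ℝ) + (M2 : ℝ)) / min (N1 : ℝ) (M2 : ℝ)

/-- Bound L3 : d1+d2 ≤ min(M1+M2, N1+N2, max(M1,N2), max(M2,N1)). -/
def L3 (M1 M2 N1 N2 : ℕ) (d : ℝ × ℝ) : Prop :=
  d.1 + d.2 ≤
    min (min ((M1 : ℝ) + (M2 : ℝ)) ((N1 : ℝ) + (N2 : ℝ)))
      (min (max (M1 : ℝ) (N2 : ℝ)) (max (M2 : ℝ) (N1 : ℝ)))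

/-- Bound L4 : d1 + d2·(N1+2N2−M2)/N2 ≤ N1+N2. -/
def L4 (M2 N1 N2 : ℕ) (d : ℝ × ℝ) : Prop :=
  d.1 + d.2 * (((N1 : ℝ) + 2 * (N2 : ℝ) - (M2 : ℝ)) / (N2 : ℝ)) ≤ (N1 : ℝ) + (N2 : ℝ)

/-- Bound L5 : d2 + d1·(N2+2N1−M1)/N1 ≤ N1+N2. -/
def L5 (M1 N1 N2 : ℕ) (d : ℝ × ℝ) : Prop :=
  d.2 + d.1 * (((N2 : ℝ) + 2 * (N1 : ℝ) - (M1 : ℝ)) / (N1 : ℝ)) ≤ (N1 : ℝ) + (N2 : ℝ)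

/-- Condition 1 : M1 > N1+N2−M2 > N1 > N2 > M2 > N2(N2−M2)/(N1−M2). -/
def Cond1 (M1 M2 N1 N2 : ℕ) : Prop :=
  (M1 : ℝ) > (N1 : ℝ) + (N2 : ℝ) - (M2 : ℝ) ∧
  (N1 : ℝ) + (N2 : ℝ) - (M2 : ℝ) > (N1 : ℝ) ∧
  (N1 : ℝ) > (N2 : ℝ) ∧ (N2 : ℝ) > (M2 : ℝ) ∧
  (M2 : ℝ) > (N2 : ℝ) * ((N2 : ℝ) - (M2 : ℝ)) / ((N1 : ℝ) - (M2 : ℝ))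

/-- Condition 2 : M2 > N1+N2−M1 > N2 > N1 > M1 > N1(N1−M1)/(N2−M1). -/
def Cond2 (M1 M2 N1 N2 : ℕ) : Prop :=
  (M2 : ℝ) > (N1 : ℝ) + (N2 : ℝ) - (M1 : ℝ) ∧
  (N1 : ℝ) + (N2 : ℝ) - (M1 : ℝ) > (N2 : ℝ) ∧
  (N2 : ℝ) > (N1 : ℝ) ∧ (N1 : ℝ) > (M1 : ℝ) ∧
  (M1 : ℝ) > (N1 : ℝ) * ((N1 : ℝ) - (M1 : ℝ)) / ((N2 : ℝ) - (M1 : ℝ))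

/-- DoF outer-bound region under perfect and instantaneous CSIT. -/
def Pinst (M1 M2 N1 N2 : ℕ) : Set (ℝ × ℝ) :=
  {d | L01 M1 N1 d ∧ L02 M2 N2 d ∧ L3 M1 M2 N1 N2 d}

/-- DoF outer-bound region under hybrid CSIT 1. -/
def Ph1 (M1 M2 N1 N2 : ℕ) : Set (ℝ × ℝ) :=
  {d | L01 M1 N1 d ∧ L02 M2 N2 d ∧ L2 M1 M2 N1 N2 d ∧ L3 M1 M2 N1 N2 d ∧
    (Cond2 M1 M2 N1 N2 → L5 M1 N1 N2 d)}

/-- DoF outer-bound region under hybrid CSIT 2. -/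
def Ph2 (M1 M2 N1 N2 : ℕ) : Set (ℝ × ℝ) :=
  {d | L01 M1 N1 d ∧ L02 M2 N2 d ∧ L1 M1 M2 N1 N2 d ∧ L3 M1 M2 N1 N2 d ∧
    (Cond1 M1 M2 N1 N2 → L4 M2 N1 N2 d)}

/-- DoF outer-bound region under delayed CSIT. -/
def Pd (M1 M2 N1 N2 : ℕ) : Set (ℝ × ℝ) :=
  {d | L01 M1 N1 d ∧ L02 M2 N2 d ∧ L1 M1 M2 N1 N2 d ∧ L2 M1 M2 N1 N2 d ∧
    L3 M1 M2 N1 N2 d ∧ (Cond1 M1 M2 N1 N2 → L4 M2 N1 N2 d) ∧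
    (Cond2 M1 M2 N1 N2 → L5 M1 N1 N2 d)}

/-- Case B: if N1 ≥ N2 and M1 > N2 > M2 ≥ 1, then Ph1 = Pi and Ph2 = Pd. -/
theorem caseB (M1 M2 N1 N2 : ℕ)
    (hM1 : 0 < M1) (hN1 : 0 < N1) (hN2 : 0 < N2)
    (h1 : N1 ≥ N2) (h2 : M1 > N2) (h3 : N2 > M2) (h4 : 1 ≤ M2) :
    Ph1 M1 M2 N1 N2 = Pinst M1 M2 N1 N2 ∧
    Ph2 M1 M2 N1 N2 = Pd M1 M2 N1 N2 := by
  have hN12 : (N2 : ℝ) ≤ N1 := by exact_mod_cast h1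
  have hM2N2 : (M2 : ℝ) < N2 := by exact_mod_cast h3
  have hM2 : (0 : ℝ) < M2 := by exact_mod_cast h4
  have hN2' : (0 : ℝ) < N2 := by exact_mod_cast hN2
  have hc2 : ¬ Cond2 M1 M2 N1 N2 := by
    rintro ⟨-, -, h, -, -⟩
    linarith
  have hL2 : ∀ d : ℝ × ℝ, L3 M1 M2 N1 N2 d → L2 M1 M2 N1 N2 d := by
    intro d h3'
    unfold L3 at h3'
    unfold L2
    have e1 : min (N1 : ℝ) (M2 : ℝ) = M2 := min_eq_right (by linarith)
    have e2 : min ((N1 : ℝ) + (N2 : ℝ)) (M2 : ℝ) = M2 := min_eq_right (by linarith)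
    have e3 : max (M2 : ℝ) (N1 : ℝ) = N1 := max_eq_right (by linarith)
    have hb1 : d.1 + d.2 ≤ (M1 : ℝ) + M2 := le_trans h3'
      (le_trans (min_le_left _ _) (min_le_left _ _))
    have hb2 : d.1 + d.2 ≤ (N1 : ℝ) := by
      have := le_trans h3' (le_trans (min_le_right _ _) (min_le_right _ _))
      rwa [e3] at this
    have hb : d.1 + d.2 ≤ min (N1 : ℝ) ((M1 : ℝ) + M2) := le_min hb2 hb1
    rw [e1, e2, ← add_div]
    gcongr
  constructor
  · ext d
    simp only [Ph1, Pinst, Set.mem_setOf_eq]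
    constructor
    · rintro ⟨a, b, c, e, f⟩; exact ⟨a, b, e⟩
    · rintro ⟨a, b, e⟩; exact ⟨a, b, hL2 d e, e, fun h => absurd h hc2⟩
  · ext d
    simp only [Ph2, Pd, Set.mem_setOf_eq]
    constructor
    · rintro ⟨a, b, c, e, f⟩
      exact ⟨a, b, c, hL2 d e, e, f, fun h => absurd h hc2⟩
    · rintro ⟨a, b, c, c2, e, f, g⟩; exact ⟨a, b, c, e, f⟩
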